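/- Let f be a positive monotone decreasing function on [a,b] where 0 < a < b. Let P = a·f(a) and Q = ∫_a^b f dx. Then -∫_a^b f(x)(1 + ln(x f(x))) dx ≥ P ln P - (P+Q) ln(P+Q). -/

import Mathlib

open MeasureTheory Set Function Filter

/-- The right limit of an antitone function is right-continuous. -/
lemma antitone_rightLim_continuousWithinAt {g : ℝ → ℝ} (hg : Antitone g) (x : ℝ) :
    ContinuousWithinAt (rightLim g) (Set.Ioi x) x := by
  have hrl : Antitone (rightLim g) := hg.rightLim
  rw [hrl.continuousWithinAt_Ioi_iff_rightLim_eq]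
  refine le_antisymm (hrl.rightLim_le le_rfl) ?_
  have h1 : ∀ y, x < y → g y ≤ rightLim (rightLim g) x := by
    intro y hy
    have hev : ∀ᶠ z in nhdsWithin x (Set.Ioi x), g y ≤ rightLim g z := by
      filter_upwards [Ioo_mem_nhdsGT_of_mem (Set.mem_Ico.2 ⟨le_rfl, hy⟩)] with z hz
      exact hg.le_rightLim hz.2
    exact ge_of_tendsto (hrl.tendsto_rightLim x) hev
  exact le_of_tendsto (hg.tendsto_rightLim x)
    (eventually_nhdsWithin_of_forall fun y hy => h1 y hy)

/-- Let `f` be a positive monotone decreasing function on `[a,b]` with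
`0 < a < b`, and let `P = a f(a)`, `Q = ∫_a^b f`.  Then
`-∫_a^b f(x)(1 + ln(x f(x))) dx ≥ P ln P - (P+Q) ln(P+Q)`. -/
theorem antitone_integral_log_inequality (a b : ℝ) (ha : 0 < a) (hab : a < b)
    (f : ℝ → ℝ) (hpos : ∀ x ∈ Set.Icc a b, 0 < f x)
    (hmono : AntitoneOn f (Set.Icc a b))
    (P Q : ℝ) (hP : P = a * f a) (hQ : Q = ∫ x in a..b, f x) :
    (-∫ x in a..b, f x * (1 + Real.log (x * f x)))
      ≥ P * Real.log P - (P + Q) * Real.log (P + Q) := by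
  -- clamp f to a globally antitone function g0
  set g0 : ℝ → ℝ := fun x => f (min b (max a x)) with hg0def
  have hclamp : ∀ x, min b (max a x) ∈ Set.Icc a b := fun x =>
    ⟨le_min hab.le (le_max_left a x), min_le_left _ _⟩
  have hg0anti : Antitone g0 := fun x y hxy =>
    hmono (hclamp x) (hclamp y) (min_le_min le_rfl (max_le_max le_rfl hxy))
  have hg0eq : ∀ x ∈ Set.Icc a b, g0 x = f x := by
    intro x hx
    simp only [hg0def, max_eq_right hx.1, min_eq_right hx.2]
  have hg0pos : ∀ x, 0 < g0 x := fun x => hpos _ (hclamp x)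
  have hfb : 0 < f b := hpos b ⟨hab.le, le_rfl⟩
  have hg0lefa : ∀ x, g0 x ≤ f a := by
    intro x
    have := hmono (Set.left_mem_Icc.2 hab.le) (hclamp x) (hclamp x).1
    simpa using this
  have hg0gefb : ∀ x, f b ≤ g0 x := by
    intro x
    have := hmono (hclamp x) (Set.right_mem_Icc.2 hab.le) (hclamp x).2
    simpa using this
  -- g : right-continuous antitone modification
  set g : ℝ → ℝ := rightLim g0 with hgdef
  have hganti : Antitone g := hg0anti.rightLim
  have hgle : ∀ x, g x ≤ g0 x := fun x => hg0anti.rightLim_le le_rfl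
  have hggefb : ∀ x, f b ≤ g x := fun x =>
    le_trans (hg0gefb (x + 1)) (hg0anti.le_rightLim (lt_add_one x))
  have hgpos : ∀ x, 0 < g x := fun x => lt_of_lt_of_le hfb (hggefb x)
  have hglefa : ∀ x, g x ≤ f a := fun x => (hgle x).trans (hg0lefa x)
  have hgcont : ∀ x, ContinuousWithinAt g (Set.Ioi x) x :=
    antitone_rightLim_continuousWithinAt hg0anti
  have hgmeas : Measurable g := hganti.measurable
  -- g = g0 a.e.
  have hae : g0 =ᵐ[volume] g := by
    have hD : Set.Countable {x | ¬ContinuousAt g0 x} := hg0anti.countable_not_continuousAt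
    have h1 : ∀ᵐ x ∂(volume : Measure ℝ), ContinuousAt g0 x := by
      rw [ae_iff]; exact hD.measure_zero _
    filter_upwards [h1] with x hx
    exact (rightLim_eq_of_tendsto
      (hx.tendsto.mono_left nhdsWithin_le_nhds)).symm
  have hgint : ∀ c d : ℝ, IntervalIntegrable g volume c d := fun c d =>
    hganti.intervalIntegrable
  -- primitive F
  set F : ℝ → ℝ := fun x => P + ∫ t in a..x, g t with hFdef
  have hFcont : Continuous F :=
    continuous_const.add (intervalIntegral.continuous_primitive (fun c d => hgint c d) a)
  have hPpos : 0 < P := by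
    rw [hP]; exact mul_pos ha (hpos a ⟨le_rfl, hab.le⟩)
  -- key pointwise bound : x * g x ≤ F x on [a,b]
  have hFge : ∀ x ∈ Set.Icc a b, x * g x ≤ F x := by
    intro x hx
    have h1 : a * g x ≤ P := by
      rw [hP]
      have : g x ≤ f a := hglefa x
      nlinarith
    have h2 : (x - a) * g x ≤ ∫ t in a..x, g t := by
      have := intervalIntegral.integral_mono_on hx.1
        (intervalIntegrable_const (c := g x)) (hgint a x)
        (fun t ht => hganti ht.2)
      simpa [intervalIntegral.integral_const, smul_eq_mul] using this
    have : a * g x + (x - a) * g x ≤ F x := add_le_add h1 h2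
    nlinarith
  have hFpos : ∀ x ∈ Set.Icc a b, 0 < F x := by
    intro x hx
    have hxpos : 0 < x := lt_of_lt_of_le ha hx.1
    exact lt_of_lt_of_le (mul_pos hxpos (hgpos x)) (hFge x hx)
  -- H = F log F, derivative computation
  set H : ℝ → ℝ := fun x => F x * Real.log (F x) with hHdef
  have hHcont : ContinuousOn H (Set.Icc a b) :=
    hFcont.continuousOn.mul
      (hFcont.continuousOn.log fun x hx => (hFpos x hx).ne')
  have hHderiv : ∀ x ∈ Set.Ioo a b,
      HasDerivWithinAt H ((Real.log (F x) + 1) * g x) (Set.Ioi x) x := by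
    intro x hx
    have hFd : HasDerivWithinAt F (g x) (Set.Ioi x) x := by
      have hm : StronglyMeasurableAtFilter g (nhdsWithin x (Set.Ioi x)) :=
        hgmeas.stronglyMeasurable.stronglyMeasurableAtFilter
      have := (intervalIntegral.integral_hasDerivWithinAt_right (s := Set.Ici x)
        (t := Set.Ioi x) (hgint a x) hm (hgcont x)).const_add P
      exact this.mono Set.Ioi_subset_Ici_self
    have hFx : (0 : ℝ) < F x := hFpos x ⟨hx.1.le, hx.2.le⟩
    have hlog : HasDerivAt (fun y : ℝ => y * Real.log y) (Real.log (F x) + 1) (F x) := by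
      have h : HasDerivAt (fun y : ℝ => y * Real.log y) _ (F x) := (hasDerivAt_id' (F x)).mul (Real.hasDerivAt_log hFx.ne')
      convert h using 1
      field_simp
    exact hlog.comp_hasDerivWithinAt x hFd
  -- the integrand with g
  set φ : ℝ → ℝ := fun x => g x * (1 + Real.log (x * g x)) with hφdef
  have hφmeas : Measurable φ :=
    hgmeas.mul ((Real.measurable_log.comp (measurable_id.mul hgmeas)).const_add 1)
  have hφint : IntegrableOn φ (Set.Icc a b) volume := by
    set C : ℝ := f a * (1 + max |Real.log (a * f b)| |Real.log (b * f a)|) with hCdef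
    refine Measure.integrableOn_of_bounded (M := C) (measure_Icc_lt_top).ne
      hφmeas.aestronglyMeasurable ?_
    rw [ae_restrict_iff' measurableSet_Icc]
    refine ae_of_all _ fun x hx => ?_
    have hxpos : 0 < x := lt_of_lt_of_le ha hx.1
    have h1 : a * f b ≤ x * g x := by
      have := hggefb x
      nlinarith [hx.1]
    have h2 : x * g x ≤ b * f a := by
      have := hglefa x
      nlinarith [hx.2, hgpos x]
    have hlb : Real.log (a * f b) ≤ Real.log (x * g x) :=
      Real.log_le_log (mul_pos ha hfb) h1
    have hub : Real.log (x * g x) ≤ Real.log (b * f a) :=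
      Real.log_le_log (mul_pos hxpos (hgpos x)) h2
    have habs : |Real.log (x * g x)| ≤ max |Real.log (a * f b)| |Real.log (b * f a)| :=
      abs_le_max_abs_abs hlb hub
    have hnn : 0 ≤ g x := (hgpos x).le
    calc ‖φ x‖ = |g x| * |1 + Real.log (x * g x)| := by
          simp [hφdef, abs_mul]
      _ ≤ f a * (1 + max |Real.log (a * f b)| |Real.log (b * f a)|) := by
          have e1 : |g x| ≤ f a := by rw [abs_of_nonneg hnn]; exact hglefa x
          have e2 : |1 + Real.log (x * g x)| ≤
              1 + max |Real.log (a * f b)| |Real.log (b * f a)| :=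
            (abs_add_le _ _).trans (by simpa using habs)
          exact mul_le_mul e1 e2 (abs_nonneg _) ((hpos a ⟨le_rfl, hab.le⟩).le)
      _ = C := rfl
  -- the key FTC inequality
  have hkey : (∫ x in a..b, φ x) ≤ H b - H a := by
    refine intervalIntegral.integral_le_sub_of_hasDeriv_right_of_le hab.le hHcont
      (g' := fun x => (Real.log (F x) + 1) * g x) hHderiv hφint ?_
    intro x hx
    have hxIcc : x ∈ Set.Icc a b := ⟨hx.1.le, hx.2.le⟩
    have hxg : 0 < x * g x := mul_pos (lt_of_lt_of_le ha hx.1.le) (hgpos x)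
    have hlog : Real.log (x * g x) ≤ Real.log (F x) :=
      Real.log_le_log hxg (hFge x hxIcc)
    have hnn : 0 ≤ g x := (hgpos x).le
    simp only [hφdef]
    nlinarith
  -- identify the integrals
  have hI1 : (∫ x in a..b, f x * (1 + Real.log (x * f x))) = ∫ x in a..b, φ x := by
    have e1 : (∫ x in a..b, f x * (1 + Real.log (x * f x)))
        = ∫ x in a..b, g0 x * (1 + Real.log (x * g0 x)) := by
      refine intervalIntegral.integral_congr fun x hx => ?_
      rw [Set.uIcc_of_le hab.le] at hx
      rw [hg0eq x hx]
    have e2 : (∫ x in a..b, g0 x * (1 + Real.log (x * g0 x))) = ∫ x in a..b, φ x := by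
      refine intervalIntegral.integral_congr_ae ?_
      filter_upwards [hae] with x hx _
      rw [hφdef]; simp only [hx]
    rw [e1, e2]
  have hQg : (∫ x in a..b, g x) = Q := by
    rw [hQ]
    have e1 : (∫ x in a..b, g x) = ∫ x in a..b, g0 x :=
      intervalIntegral.integral_congr_ae (by filter_upwards [hae] with x hx _; rw [hx])
    have e2 : (∫ x in a..b, g0 x) = ∫ x in a..b, f x := by
      refine intervalIntegral.integral_congr fun x hx => ?_
      rw [Set.uIcc_of_le hab.le] at hx
      exact hg0eq x hx
    rw [e1, e2]
  have hHa : H a = P * Real.log P := by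
    simp [hHdef, hFdef, intervalIntegral.integral_same]
  have hHb : H b = (P + Q) * Real.log (P + Q) := by
    simp [hHdef, hFdef, hQg]
  rw [ge_iff_le, hI1]
  rw [hHa, hHb] at hkey
  linarith
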